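/- Let n ≥ 1 and let S ⊆ (2^ω)^n be a null set with respect to the n-fold product of the coin-flipping measure. Then there exists a sequence ⟨J_m ; m ∈ ℕ⟩ with J_m ⊆ (2^m)^n (i.e., J_m a set of n-tuples of binary strings of length m) such that ∑_m |J_m| / (2^m)^n < ∞ and S ⊆ { x ∈ (2^ω)^n : there are infinitely many m with (x_0↾m, …, x_{n−1}↾m) ∈ J_m }. -/

import Mathlib

open MeasureTheory

/-- `μ` is the coin-flipping (fair Bernoulli product) measure on Cantor space `ℕ → Bool`:
every basic clopen set determined by a finite binary string `s` has measure `2^(-|s|)`. -/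
def IsCoinMeasure (μ : Measure (ℕ → Bool)) : Prop :=
  ∀ s : List Bool,
    μ {x : ℕ → Bool | ∀ i : Fin s.length, x i = s.get i} = (1 / 2 : ENNReal) ^ s.length

theorem coin_cyl {μ : Measure (ℕ → Bool)} (hμ : IsCoinMeasure μ) (m : ℕ) (t : Fin m → Bool) :
    μ {y : ℕ → Bool | ∀ j : Fin m, y j = t j} = (1 / 2 : ENNReal) ^ m := by
  have h := hμ (List.ofFn t)
  have hlen : (List.ofFn t).length = m := List.length_ofFn
  have hset : {x : ℕ → Bool | ∀ i : Fin (List.ofFn t).length, x i = (List.ofFn t).get i}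
      = {y : ℕ → Bool | ∀ j : Fin m, y j = t j} := by
    ext y
    constructor
    · intro hy j
      have := hy (Fin.cast hlen.symm j)
      rw [List.get_ofFn] at this
      simpa using this
    · intro hy i
      rw [List.get_ofFn]
      exact hy (Fin.cast hlen i)
  rw [hset, hlen] at h
  exact h

theorem coin_prob {μ : Measure (ℕ → Bool)} (hμ : IsCoinMeasure μ) : IsProbabilityMeasure μ := by
  constructor
  have h := hμ []
  simpa using h

def cylSet (n m : ℕ) (s : Fin n → Fin m → Bool) : Set (Fin n → ℕ → Bool) :=
  {x | ∀ (i : Fin n) (j : Fin m), x i j = s i j}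

theorem cylSet_eq_pi (n m : ℕ) (s : Fin n → Fin m → Bool) :
    cylSet n m s = Set.pi Set.univ (fun i => {y : ℕ → Bool | ∀ j : Fin m, y j = s i j}) := by
  ext x; simp [cylSet, Set.mem_pi]

theorem cylSet_measurable (n m : ℕ) (s : Fin n → Fin m → Bool) :
    MeasurableSet (cylSet n m s) := by
  rw [cylSet_eq_pi]
  apply MeasurableSet.univ_pi
  intro i
  have : {y : ℕ → Bool | ∀ j : Fin m, y j = s i j} = ⋂ j : Fin m, {y : ℕ → Bool | y j = s i j} := by
    ext y; simp
  rw [this]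
  refine MeasurableSet.iInter fun j => ?_
  have h2 : {y : ℕ → Bool | y j = s i j} = (fun y : ℕ → Bool => y (j : ℕ)) ⁻¹' {s i j} := rfl
  rw [h2]
  exact measurable_pi_apply (j : ℕ) (measurableSet_singleton _)

theorem cylSet_measure (n m : ℕ) (μ : Measure (ℕ → Bool)) [SigmaFinite μ]
    (hcyl : ∀ (t : Fin m → Bool), μ {y : ℕ → Bool | ∀ j : Fin m, y j = t j} = (1 / 2 : ENNReal) ^ m)
    (s : Fin n → Fin m → Bool) :
    Measure.pi (fun _ : Fin n => μ) (cylSet n m s) = ((1 / 2 : ENNReal) ^ m) ^ n := by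
  rw [cylSet_eq_pi, Measure.pi_pi]
  simp [hcyl]

theorem cyl_basis (n : ℕ) (U : Set (Fin n → ℕ → Bool)) (hU : IsOpen U)
    (x : Fin n → ℕ → Bool) (hx : x ∈ U) :
    ∃ m : ℕ, cylSet n m (fun i j => x i j) ⊆ U := by
  rcases (isOpen_pi_iff.1 hU) x hx with ⟨I, u, hu, hsub⟩
  have key : ∀ i ∈ I, ∃ m : ℕ, {y : ℕ → Bool | ∀ j : Fin m, y j = x i j} ⊆ u i := by
    intro i hi
    rcases (isOpen_pi_iff.1 (hu i hi).1) (x i) (hu i hi).2 with ⟨I', v, hv, hsub'⟩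
    refine ⟨(I'.sup id) + 1, ?_⟩
    intro y hy
    apply hsub'
    intro j hj
    have hjlt : j < (I'.sup id) + 1 := Nat.lt_succ_of_le (Finset.le_sup (f := id) hj)
    have := hy ⟨j, hjlt⟩
    simp only [Set.mem_setOf_eq] at this
    rw [this]
    exact (hv j hj).2
  choose! M hM using key
  refine ⟨I.sup M, fun y hy => ?_⟩
  apply hsub
  intro i hi
  apply hM i hi
  intro j
  exact hy i ⟨j, lt_of_lt_of_le j.2 (Finset.le_sup (f := M) hi)⟩

/-- the truncation of a tuple of strings -/
def trunc (n : ℕ) {m' m : ℕ} (h : m' ≤ m) (s : Fin n → Fin m → Bool) : Fin n → Fin m' → Bool :=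
  fun i j => s i (Fin.castLE h j)

/-- the minimal-cylinder family of a set -/
def Dset (n : ℕ) (U : Set (Fin n → ℕ → Bool)) (m : ℕ) : Set (Fin n → Fin m → Bool) :=
  {s | cylSet n m s ⊆ U ∧ ∀ m' (h : m' < m), ¬ cylSet n m' (trunc n h.le s) ⊆ U}

theorem eq_of_mem_cyl {n m : ℕ} {s : Fin n → Fin m → Bool} {x : Fin n → ℕ → Bool}
    (hx : x ∈ cylSet n m s) : s = fun i (j : Fin m) => x i (j : ℕ) := by
  funext i j; exact (hx i j).symm

theorem Dset_disjoint {n : ℕ} {U : Set (Fin n → ℕ → Bool)}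
    {m m' : ℕ} {s : Fin n → Fin m → Bool} {s' : Fin n → Fin m' → Bool}
    (hs : s ∈ Dset n U m) (hs' : s' ∈ Dset n U m')
    (hne : ¬ (∃ h : m = m', h ▸ s = s'))
    {x : Fin n → ℕ → Bool} (hx : x ∈ cylSet n m s) (hx' : x ∈ cylSet n m' s') : False := by
  rcases lt_trichotomy m m' with hlt | heq | hgt
  · apply hs'.2 m hlt
    have : trunc n hlt.le s' = s := by
      rw [eq_of_mem_cyl hx, eq_of_mem_cyl hx']
      rfl
    rw [this]
    exact hs.1
  · subst heq
    exact hne ⟨rfl, by rw [eq_of_mem_cyl hx, eq_of_mem_cyl hx']⟩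
  · apply hs.2 m' hgt
    have : trunc n hgt.le s = s' := by
      rw [eq_of_mem_cyl hx, eq_of_mem_cyl hx']
      rfl
    rw [this]
    exact hs'.1

theorem Dsum_le (n : ℕ) (μ : Measure (ℕ → Bool)) [IsProbabilityMeasure μ]
    (hcyl : ∀ m (t : Fin m → Bool), μ {y : ℕ → Bool | ∀ j : Fin m, y j = t j} = (1/2:ENNReal)^m)
    (U : Set (Fin n → ℕ → Bool)) :
    ∑' m : ℕ, ((Set.toFinite (Dset n U m)).toFinset.card : ENNReal) * ((1/2:ENNReal)^m)^n
      ≤ Measure.pi (fun _ : Fin n => μ) U := by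
  classical
  set ν := Measure.pi (fun _ : Fin n => μ) with hν
  set f : (Σ m : ℕ, (Dset n U m)) → Set (Fin n → ℕ → Bool) :=
    fun σ => cylSet n σ.1 σ.2.1 with hf
  have hdisj : Pairwise (Function.onFun Disjoint f) := by
    rintro ⟨m, s, hs⟩ ⟨m', s', hs'⟩ hne
    rw [Function.onFun, Set.disjoint_left]
    intro x hx hx'
    refine Dset_disjoint hs hs' ?_ hx hx'
    rintro ⟨h, h2⟩
    subst h
    simp only at h2
    subst h2
    exact hne rfl
  have hmeas : ∀ σ, MeasurableSet (f σ) := fun σ => cylSet_measurable n σ.1 σ.2.1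
  have hUnion := measure_iUnion (μ := ν) hdisj hmeas
  have hsub : (⋃ σ, f σ) ⊆ U := Set.iUnion_subset fun σ => σ.2.2.1
  have h1 : ∑' σ, ν (f σ) ≤ ν U := hUnion ▸ measure_mono hsub
  refine le_trans (le_of_eq ?_) h1
  rw [ENNReal.tsum_sigma']
  congr 1
  funext m
  haveI : Fintype (Dset n U m) := (Set.toFinite (Dset n U m)).fintype
  rw [tsum_fintype]
  have hval : ∀ s : (Dset n U m), ν (f ⟨m, s⟩) = ((1/2:ENNReal)^m)^n :=
    fun s => cylSet_measure n m μ (hcyl m) s.1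
  simp only [hval]
  rw [Finset.sum_const, Finset.card_univ, nsmul_eq_mul]
  congr 2
  exact (Set.toFinite (Dset n U m)).card_toFinset

/-- Every null set `S ⊆ (2^ω)^n` is covered by a "small" sequence of sets of `n`-tuples of
binary strings: there are `J m ⊆ (2^m)^n` with `∑_m |J m|/(2^m)^n < ∞` such that every
element of `S` has infinitely many of its restrictions in the corresponding `J m`. -/
theorem null_set_covered_by_small_cylinders
    (n : ℕ) (hn : 1 ≤ n)
    (μ : Measure (ℕ → Bool)) (hμ : IsCoinMeasure μ)
    (S : Set (Fin n → (ℕ → Bool)))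
    (hS : Measure.pi (fun _ : Fin n => μ) S = 0) :
    ∃ J : (m : ℕ) → Finset (Fin n → (Fin m → Bool)),
      Summable (fun m : ℕ => ((J m).card : ℝ) / ((2 : ℝ) ^ m) ^ n) ∧
      S ⊆ {x : Fin n → (ℕ → Bool) |
        {m : ℕ | (fun (i : Fin n) (j : Fin m) => x i j) ∈ J m}.Infinite} := by
  classical
  haveI : IsProbabilityMeasure μ := coin_prob hμ
  set ν := Measure.pi (fun _ : Fin n => μ) with hν
  have hcyl : ∀ m (t : Fin m → Bool), μ {y : ℕ → Bool | ∀ j : Fin m, y j = t j}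
      = (1/2:ENNReal)^m := fun m t => coin_cyl hμ m t
  -- open covers
  have hUex : ∀ k : ℕ, ∃ U, S ⊆ U ∧ IsOpen U ∧ ν U < (1/2:ENNReal)^k := by
    intro k
    have hpos : (0:ENNReal) < (1/2:ENNReal)^k := by
      apply ENNReal.pow_pos
      simp
    have hlt : ν S < (1/2:ENNReal)^k := by rw [hS]; exact hpos
    obtain ⟨U, h1, h2, h3⟩ := Set.exists_isOpen_lt_of_lt S _ hlt
    exact ⟨U, h1, h2, h3⟩
  choose U hSU hUo hUm using hUex
  set Jset : (m : ℕ) → Set (Fin n → Fin m → Bool) :=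
    fun m => {s | ∃ k, s ∈ Dset n (U k) m} with hJset
  refine ⟨fun m => (Set.toFinite (Jset m)).toFinset, ?_, ?_⟩
  · -- summability
    set g : ℕ → ENNReal :=
      fun m => (((Set.toFinite (Jset m)).toFinset.card : ENNReal)) * ((1/2:ENNReal)^m)^n with hg
    have hcard : ∀ m, (((Set.toFinite (Jset m)).toFinset.card : ENNReal))
        ≤ ∑' k : ℕ, ((Set.toFinite (Dset n (U k) m)).toFinset.card : ENNReal) := by
      intro m
      have hunion : Jset m = ⋃ k, Dset n (U k) m := by
        ext s; simp [hJset, Dset]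
      have h1 : Measure.count (Jset m) ≤ ∑' k, Measure.count (Dset n (U k) m) := by
        rw [hunion]; exact measure_iUnion_le _
      rwa [Measure.count_apply_finite _ (Set.toFinite (Jset m)),
        tsum_congr (fun k => Measure.count_apply_finite _ (Set.toFinite (Dset n (U k) m)))] at h1
    have hgsum : ∑' m, g m ≠ ⊤ := by
      have step1 : ∑' m, g m ≤ ∑' (m : ℕ) (k : ℕ),
          ((Set.toFinite (Dset n (U k) m)).toFinset.card : ENNReal) * ((1/2:ENNReal)^m)^n := by
        refine ENNReal.tsum_le_tsum fun m => ?_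
        rw [ENNReal.tsum_mul_right]
        exact mul_le_mul_left (hcard m) _
      have step2 : ∑' (m : ℕ) (k : ℕ),
          ((Set.toFinite (Dset n (U k) m)).toFinset.card : ENNReal) * ((1/2:ENNReal)^m)^n
          = ∑' (k : ℕ) (m : ℕ),
          ((Set.toFinite (Dset n (U k) m)).toFinset.card : ENNReal) * ((1/2:ENNReal)^m)^n :=
        ENNReal.tsum_comm
      have step3 : ∑' (k : ℕ) (m : ℕ),
          ((Set.toFinite (Dset n (U k) m)).toFinset.card : ENNReal) * ((1/2:ENNReal)^m)^n
          ≤ ∑' k : ℕ, (1/2:ENNReal)^k := by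
        refine ENNReal.tsum_le_tsum fun k => ?_
        exact le_trans (Dsum_le n μ hcyl (U k)) (hUm k).le
      have step4 : ∑' k : ℕ, (1/2:ENNReal)^k ≠ ⊤ := by
        rw [ENNReal.tsum_geometric]
        simp [ENNReal.sub_half]
      exact ne_top_of_le_ne_top step4 (le_trans step1 (step2 ▸ step3))
    have hsummable := ENNReal.summable_toReal hgsum
    refine Summable.congr hsummable fun m => ?_
    rw [hg]
    simp only [ENNReal.toReal_mul, ENNReal.toReal_pow, ENNReal.toReal_natCast]
    rw [ENNReal.toReal_div]
    simp only [ENNReal.toReal_one, ENNReal.toReal_ofNat]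
    rw [div_pow, one_pow, div_pow, one_pow, mul_one_div]
  · -- coverage
    intro x hx
    simp only [Set.mem_setOf_eq]
    set T : Set ℕ := {m | (fun (i : Fin n) (j : Fin m) => x i j) ∈
        (Set.toFinite (Jset m)).toFinset} with hT
    -- for each k produce an element of T with m * n > k
    have key : ∀ k : ℕ, ∃ m ∈ T, k < m * n := by
      intro k
      have hxU : x ∈ U k := hSU k hx
      have hP : ∃ m : ℕ, cylSet n m (fun i j => x i j) ⊆ U k := cyl_basis n (U k) (hUo k) x hxU
      set mk := Nat.find hP with hmk
      have hspec : cylSet n mk (fun i (j : Fin mk) => x i (j:ℕ)) ⊆ U k := Nat.find_spec hP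
      have hmemD : (fun i (j : Fin mk) => x i (j:ℕ)) ∈ Dset n (U k) mk := by
        refine ⟨hspec, fun m' h hcontra => ?_⟩
        exact Nat.find_min hP h hcontra
      have hmemT : mk ∈ T := by
        rw [hT]
        simp only [Set.mem_setOf_eq, Set.Finite.mem_toFinset]
        exact ⟨k, hmemD⟩
      refine ⟨mk, hmemT, ?_⟩
      by_contra hle
      push_neg at hle
      have hmeas := cylSet_measure n mk μ (hcyl mk) (fun i (j : Fin mk) => x i (j:ℕ))
      have h1 : ((1/2:ENNReal)^mk)^n ≤ ν (U k) := by
        rw [← hmeas]; exact measure_mono hspec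
      have h2 : ((1/2:ENNReal)^mk)^n < (1/2:ENNReal)^k := lt_of_le_of_lt h1 (hUm k)
      rw [← pow_mul] at h2
      have h3 : (1/2:ENNReal)^k ≤ (1/2:ENNReal)^(mk * n) :=
        pow_le_pow_of_le_one zero_le ENNReal.half_le_self hle
      exact absurd (lt_of_lt_of_le h2 h3) (lt_irrefl _)
    -- T is infinite
    by_contra hfin
    rw [Set.not_infinite] at hfin
    obtain ⟨N, hN⟩ := hfin.bddAbove
    obtain ⟨m, hmT, hmk⟩ := key (N * n)
    have : m ≤ N := hN hmT
    have : m * n ≤ N * n := Nat.mul_le_mul_right n this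
    omega
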